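/- arXiv:2006.13355 — 2 statements merged into one kernel-verified Lean document; each statement's English description precedes it below -/
import Mathlib

section
/- Fix an integer Q ≥ 2, a real constant c > 0, and an integer m ≥ 1. For n large enough that the series converges, define H₂^m(n) = Σ_{k ≥ 2} ((u_{n+k} − u_n)^m / log u_{n+k}) · [∏_{j=1}^{k−1} (1 − c/log u_{n+j}) − (1 − c/log u_n)^{k−1}]. Then for every ε > 0, H₂^m(n) = O((log n)^{m+ε}/n) as n → ∞. -/
open Nat Filter

/-- `useq Q n` is `u_n`, the `n`-th positive integer coprime to `Q`
(increasing enumeration, `u₁ = 1`). -/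
noncomputable def useq (Q : ℕ) (n : ℕ) : ℕ :=
  Nat.nth (fun m => 0 < m ∧ Nat.Coprime m Q) (n - 1)

/-- `H₂^m(n) = Σ_{k ≥ 2} ((u_{n+k} - u_n)^m / log u_{n+k})
      [∏_{j=1}^{k-1} (1 - c/log u_{n+j}) - (1 - c/log u_n)^{k-1}]`. -/
noncomputable def H2 (Q : ℕ) (c : ℝ) (m : ℕ) (n : ℕ) : ℝ :=
  ∑' k : ℕ,
    (((useq Q (n + (k + 2)) : ℝ) - (useq Q n : ℝ)) ^ m / Real.log (useq Q (n + (k + 2)))) *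
      (∏ j ∈ Finset.Icc 1 (k + 1), (1 - c / Real.log (useq Q (n + j))) -
        (1 - c / Real.log (useq Q n)) ^ (k + 1))

private def cp (Q : ℕ) : ℕ → Prop := fun m => 0 < m ∧ Nat.Coprime m Q

private instance (Q : ℕ) : DecidablePred (cp Q) := fun m =>
  inferInstanceAs (Decidable (0 < m ∧ Nat.Coprime m Q))

lemma cp_infinite {Q : ℕ} (hQ : 2 ≤ Q) : (setOf (cp Q)).Infinite := by
  apply Set.infinite_of_injective_forall_mem (f := fun n : ℕ => n * Q + 1)
  case hi =>
    intro a b h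
    simp only [add_left_inj] at h
    exact Nat.eq_of_mul_eq_mul_right (by omega) h
  case hf =>
    intro n
    exact ⟨by omega, by simp [Nat.Coprime]⟩

lemma nth_cp_zero {Q : ℕ} (hQ : 2 ≤ Q) : Nat.nth (cp Q) 0 = 1 := by
  have h1 : cp Q 1 := ⟨one_pos, Nat.coprime_one_left Q⟩
  have hc : Nat.count (cp Q) 1 = 0 := by
    rw [show (1:ℕ) = 0 + 1 from rfl, Nat.count_succ]
    simp [Nat.count_zero, cp]
  have := Nat.nth_count h1
  rwa [hc] at this




lemma nth_cp_mem (hQ : 2 ≤ Q) (i : ℕ) : 0 < Nat.nth (cp Q) i ∧ (Nat.nth (cp Q) i).Coprime Q :=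
  Nat.nth_mem_of_infinite (cp_infinite hQ) i

lemma nth_cp_succ_le (hQ : 2 ≤ Q) (i : ℕ) : Nat.nth (cp Q) (i + 1) ≤ Nat.nth (cp Q) i + Q := by
  by_contra h
  push_neg at h
  have hmem : cp Q (Nat.nth (cp Q) i + Q) := by
    obtain ⟨h1, h2⟩ := nth_cp_mem hQ i
    exact ⟨by omega, by simpa [Nat.Coprime] using h2⟩
  have := Nat.le_nth_of_lt_nth_succ (p := cp Q) h hmem
  omega

lemma nth_cp_lt (hQ : 2 ≤ Q) {i j : ℕ} (h : i < j) : Nat.nth (cp Q) i < Nat.nth (cp Q) j :=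
  (Nat.nth_lt_nth (cp_infinite hQ)).2 h

lemma nth_cp_ge (hQ : 2 ≤ Q) (i : ℕ) : i + 1 ≤ Nat.nth (cp Q) i := by
  induction i with
  | zero => exact (nth_cp_mem hQ 0).1
  | succ i ih =>
    have := nth_cp_lt hQ (show i < i + 1 by omega)
    show i + 1 + 1 ≤ Nat.nth (cp Q) (i+1)
    omega

lemma nth_cp_add_le (hQ : 2 ≤ Q) (i j : ℕ) :
    Nat.nth (cp Q) (i + j) ≤ Nat.nth (cp Q) i + Q * j := by
  induction j with
  | zero => simp
  | succ j ih =>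
    have := nth_cp_succ_le hQ (i + j)
    have h2 : i + (j+1) = (i + j) + 1 := by omega
    rw [h2]
    have h3 : Q * (j+1) = Q * j + Q := by ring
    omega

lemma useq_eq (n : ℕ) : useq Q n = Nat.nth (cp Q) (n - 1) := rfl

lemma useq_ge (hQ : 2 ≤ Q) {n : ℕ} (hn : 1 ≤ n) : n ≤ useq Q n := by
  have := nth_cp_ge hQ (n - 1); rw [useq_eq]; omega

lemma useq_add_le (hQ : 2 ≤ Q) {n : ℕ} (hn : 1 ≤ n) (j : ℕ) :
    useq Q (n + j) ≤ useq Q n + Q * j := by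
  have h1 : n + j - 1 = (n - 1) + j := by omega
  rw [useq_eq, useq_eq, h1]
  exact nth_cp_add_le hQ _ _

lemma useq_mono (hQ : 2 ≤ Q) {n a b : ℕ} (hn : 1 ≤ n) (h : a ≤ b) :
    useq Q (n + a) ≤ useq Q (n + b) := by
  rw [useq_eq, useq_eq]
  exact Nat.nth_monotone (cp_infinite hQ) (by omega)


lemma useq_le {Q : ℕ} (hQ : 2 ≤ Q) {n : ℕ} (hn : 1 ≤ n) : useq Q n ≤ Q * n := by
  have h := nth_cp_add_le hQ 0 (n - 1)
  rw [Nat.zero_add, nth_cp_zero hQ] at h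
  rw [useq_eq]
  have : 1 + Q * (n-1) ≤ Q * n := by
    have : Q * (n - 1) + Q = Q * n := by
      rw [← Nat.mul_succ]
      congr 1
      omega
    omega
  omega

lemma pow_le_prod_Icc {a : ℕ → ℝ} {b : ℝ} (hb : 0 ≤ b) (K : ℕ)
    (h1 : ∀ j ∈ Finset.Icc 1 K, b ≤ a j) :
    b ^ K ≤ ∏ j ∈ Finset.Icc 1 K, a j := by
  have := Finset.prod_le_prod (f := fun _ : ℕ => b) (g := a) (s := Finset.Icc 1 K)
    (fun i _ => hb) h1
  simpa [Nat.card_Icc] using this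

lemma prod_sub_pow_le {a : ℕ → ℝ} {b A d : ℝ} (hb : 0 ≤ b) (hA : A ≤ 1) :
    ∀ K : ℕ, 1 ≤ K →
    (∀ j ∈ Finset.Icc 1 K, b ≤ a j) → (∀ j ∈ Finset.Icc 1 K, a j ≤ A) →
    (∀ j ∈ Finset.Icc 1 K, a j - b ≤ d) →
    ∏ j ∈ Finset.Icc 1 K, a j - b ^ K ≤ K * d * A ^ (K - 1) := by
  intro K
  induction K with
  | zero => omega
  | succ K ih =>
    intro _ h1 h2 h3
    have mem_top : K + 1 ∈ Finset.Icc 1 (K + 1) := by simp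
    have hbA : b ≤ A := le_trans (h1 _ mem_top) (h2 _ mem_top)
    have hA0 : 0 ≤ A := le_trans hb hbA
    have hd0 : 0 ≤ d := le_trans (by have := h1 _ mem_top; linarith) (h3 _ mem_top)
    rcases Nat.eq_or_lt_of_le (Nat.one_le_iff_ne_zero.2 (Nat.succ_ne_zero K)) with h | hK1
    · -- K + 1 = 1, i.e., K = 0
      have hK0 : K = 0 := by omega
      subst hK0
      simp only [Finset.Icc_self, Finset.prod_singleton, pow_one]
      have := h3 1 (by simp)
      simpa using by linarith
    · have hK : 1 ≤ K := by omega
      have hsub : ∀ P ∈ Finset.Icc 1 K, P ∈ Finset.Icc 1 (K+1) := by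
        intro x hx; simp at hx ⊢; omega
      have h1' := fun j hj => h1 j (hsub j hj)
      have h2' := fun j hj => h2 j (hsub j hj)
      have h3' := fun j hj => h3 j (hsub j hj)
      have ihK := ih hK h1' h2' h3'
      have hprod : ∏ j ∈ Finset.Icc 1 (K+1), a j
          = (∏ j ∈ Finset.Icc 1 K, a j) * a (K+1) := by
        rw [Finset.prod_Icc_succ_top (by omega)]
      have hPnn : b ^ K ≤ ∏ j ∈ Finset.Icc 1 K, a j := pow_le_prod_Icc hb K h1'
      have hPle : ∏ j ∈ Finset.Icc 1 K, a j ≤ A ^ K := by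
        have := Finset.prod_le_prod (s := Finset.Icc 1 K) (f := a) (g := fun _ => A)
          (fun i hi => le_trans hb (h1' i hi)) h2'
        simpa [Nat.card_Icc] using this
      have key : ∏ j ∈ Finset.Icc 1 (K+1), a j - b ^ (K+1)
          = a (K+1) * (∏ j ∈ Finset.Icc 1 K, a j - b ^ K) + b ^ K * (a (K+1) - b) := by
        rw [hprod]; ring
      rw [key]
      have e1 : a (K+1) * (∏ j ∈ Finset.Icc 1 K, a j - b ^ K) ≤ A * (K * d * A ^ (K-1)) := by
        apply mul_le_mul (h2 _ mem_top) ihK (by linarith) hA0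
      have e2 : b ^ K * (a (K+1) - b) ≤ A ^ K * d := by
        apply mul_le_mul (pow_le_pow_left₀ hb hbA K) (h3 _ mem_top)
          (by have := h1 _ mem_top; linarith) (pow_nonneg hA0 K)
      have hAK : A * A ^ (K - 1) = A ^ K := by
        rw [mul_comm, ← pow_succ]
        congr 1
        omega
      have : A * (K * d * A ^ (K-1)) = K * d * A ^ K := by
        rw [← hAK]; ring
      rw [this] at e1
      have goal_eq : ((K:ℝ)+1) * d * A ^ (K + 1 - 1) = K * d * A ^ K + A ^ K * d := by
        have : K + 1 - 1 = K := by omega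
        rw [this]; ring
      push_cast
      push_cast at goal_eq
      linarith
set_option maxHeartbeats 1000000 in

lemma tail_bound (Q : ℕ) (hQ : 2 ≤ Q) (c : ℝ) (hc : 0 < c) (M : ℕ) :
    ∀ᶠ k : ℕ in atTop,
      ((k:ℝ)+2)^M * Real.exp (-(c*(k:ℝ))/Real.log (3*Q*k)) ≤ (((k:ℝ)+1)^2)⁻¹ := by
  set δ : ℝ := Real.sqrt (c / ((M+4) * (3*Q))) with hδdef
  have hQ0 : (0:ℝ) < Q := by exact_mod_cast (by omega : 0 < Q)
  have hQR : (2:ℝ) ≤ Q := by exact_mod_cast hQ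
  have hδpos : 0 < δ := Real.sqrt_pos.2 (by positivity)
  have hδsq : δ^2 * (3*Q) ≤ c / (M+4) := by
    rw [hδdef, Real.sq_sqrt (by positivity)]
    apply le_of_eq
    field_simp
  have hlog : ∀ᶠ x : ℝ in atTop, ‖Real.log x‖ ≤ δ * ‖x ^ ((1:ℝ)/2)‖ :=
    (isLittleO_log_rpow_atTop (by norm_num : (0:ℝ) < 1/2)).def hδpos
  have htend : Filter.Tendsto (fun k : ℕ => (3*(Q:ℝ)*(k:ℝ))) atTop atTop :=
    Filter.Tendsto.const_mul_atTop (by positivity) tendsto_natCast_atTop_atTop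
  have hlog' : ∀ᶠ k : ℕ in atTop,
      ‖Real.log (3*(Q:ℝ)*k)‖ ≤ δ * ‖(3*(Q:ℝ)*k) ^ ((1:ℝ)/2)‖ := htend.eventually hlog
  filter_upwards [hlog', eventually_ge_atTop (2^(M+2)), eventually_ge_atTop 2] with k hk hk1 hk2
  have hkR : (2:ℝ) ≤ (k:ℝ) := by exact_mod_cast hk2
  have hy0 : (0:ℝ) < 3*(Q:ℝ)*k := by positivity
  have hlogpos : 0 < Real.log (3*(Q:ℝ)*k) := by
    apply Real.log_pos; nlinarith [hQR, hkR]
  -- squared bound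
  have h1 : (Real.log (3*(Q:ℝ)*k))^2 ≤ δ^2 * (3*Q*k) := by
    have := hk
    rw [Real.norm_eq_abs, Real.norm_eq_abs] at this
    have h2 : |Real.log (3*(Q:ℝ)*k)| = Real.log (3*(Q:ℝ)*k) := abs_of_pos hlogpos
    have h3 : |(3*(Q:ℝ)*k) ^ ((1:ℝ)/2)| = (3*(Q:ℝ)*k) ^ ((1:ℝ)/2) :=
      abs_of_nonneg (Real.rpow_nonneg hy0.le _)
    rw [h2, h3] at this
    have h4 : ((3*(Q:ℝ)*k) ^ ((1:ℝ)/2))^2 = 3*(Q:ℝ)*k := by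
      rw [← Real.rpow_natCast ((3*(Q:ℝ)*k) ^ ((1:ℝ)/2)) 2, ← Real.rpow_mul hy0.le]
      norm_num
    calc (Real.log (3*(Q:ℝ)*k))^2 ≤ (δ * (3*(Q:ℝ)*k) ^ ((1:ℝ)/2))^2 := by
          apply sq_le_sq' _ this
          nlinarith [Real.rpow_nonneg hy0.le ((1:ℝ)/2), hδpos.le, hlogpos]
      _ = δ^2 * (3*(Q:ℝ)*k) := by rw [mul_pow, h4]
  have h5 : ((M:ℝ)+4) * (Real.log (3*(Q:ℝ)*k))^2 ≤ c * k := by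
    have : δ^2 * (3*(Q:ℝ)*k) ≤ (c / (M+4)) * k := by
      have := mul_le_mul_of_nonneg_right hδsq (by positivity : (0:ℝ) ≤ (k:ℝ))
      calc δ^2 * (3*(Q:ℝ)*k) = δ^2 * (3*Q) * k := by ring
        _ ≤ (c / (M+4)) * k := this
    have hM4 : (0:ℝ) < (M:ℝ)+4 := by positivity
    calc ((M:ℝ)+4) * (Real.log (3*(Q:ℝ)*k))^2 ≤ ((M:ℝ)+4) * ((c / (M+4)) * k) := by
          nlinarith [h1, this]
      _ = c * k := by field_simp
  -- thus c k / log ≥ (M+4) log k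
  have hlogk_le : Real.log k ≤ Real.log (3*(Q:ℝ)*k) := by
    apply Real.log_le_log (by positivity); nlinarith [hQR, hkR]
  have hlogk0 : 0 < Real.log k := Real.log_pos (by nlinarith)
  have h6 : ((M:ℝ)+4) * Real.log k ≤ c * k / Real.log (3*(Q:ℝ)*k) := by
    rw [le_div_iff₀ hlogpos]
    calc ((M:ℝ)+4) * Real.log k * Real.log (3*(Q:ℝ)*k)
        ≤ ((M:ℝ)+4) * (Real.log (3*(Q:ℝ)*k))^2 := by
          have hsq : (Real.log (3*(Q:ℝ)*k))^2 = Real.log (3*(Q:ℝ)*k) * Real.log (3*(Q:ℝ)*k) := sq (Real.log (3*(Q:ℝ)*k)) ▸ by ring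
          nlinarith [mul_le_mul_of_nonneg_right hlogk_le hlogpos.le, hlogk0]
      _ ≤ c * k := h5
  have h7 : Real.exp (-(c*(k:ℝ))/Real.log (3*(Q:ℝ)*k)) ≤ ((k:ℝ)^(M+4))⁻¹ := by
    have : Real.exp (-(c*(k:ℝ))/Real.log (3*(Q:ℝ)*k)) ≤ Real.exp (-(((M:ℝ)+4) * Real.log k)) := by
      apply Real.exp_le_exp.2
      rw [neg_div]
      linarith
    refine this.trans (le_of_eq ?_)
    rw [Real.exp_neg]
    congr 1
    rw [show ((M:ℝ)+4) * Real.log k = ((M+4 : ℕ):ℝ) * Real.log k by push_cast; ring]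
    rw [Real.exp_nat_mul, Real.exp_log (by positivity)]
  -- final arithmetic
  have hexp_nonneg : 0 ≤ ((k:ℝ)+2)^M := by positivity
  calc ((k:ℝ)+2)^M * Real.exp (-(c*(k:ℝ))/Real.log (3*(Q:ℝ)*k))
      ≤ ((k:ℝ)+2)^M * ((k:ℝ)^(M+4))⁻¹ := by
        exact mul_le_mul_of_nonneg_left h7 hexp_nonneg
    _ ≤ (((k:ℝ)+1)^2)⁻¹ := by
        rw [mul_inv_le_iff₀ (by positivity), inv_mul_eq_div, le_div_iff₀ (by positivity)]
        have e1 : ((k:ℝ)+2)^M ≤ (2*k)^M := by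
          apply pow_le_pow_left₀ (by positivity) (by linarith)
        have e2 : ((k:ℝ)+1)^2 ≤ (2*k)^2 := by
          apply pow_le_pow_left₀ (by positivity) (by linarith)
        have e3 : ((k:ℝ)+2)^M * ((k:ℝ)+1)^2 ≤ (2*k)^(M+2) := by
          rw [pow_add]
          exact mul_le_mul e1 e2 (by positivity) (by positivity)
        refine e3.trans ?_
        have h2k : (2:ℝ)^(M+2) ≤ (k:ℝ) := by exact_mod_cast hk1
        have hk1R : (2:ℝ)^(M+2) ≤ (k:ℝ)^2 := by nlinarith [hkR]
        calc ((2:ℝ)*k)^(M+2) = 2^(M+2) * (k:ℝ)^(M+2) := by rw [mul_pow]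
          _ ≤ (k:ℝ)^2 * (k:ℝ)^(M+2) := by
              exact mul_le_mul_of_nonneg_right hk1R (by positivity)
          _ = (k:ℝ)^(M+4) := by rw [← pow_add]; ring_nf

lemma geom_exp_summable {l : ℝ} (hl0 : 0 < l) :
    Summable (fun k : ℕ => Real.exp (-(l/2) * (k:ℝ))) := by
  have h : ∀ k : ℕ, Real.exp (-(l/2) * (k:ℝ)) = (Real.exp (-(l/2)))^k := by
    intro k; rw [← Real.exp_nat_mul]; ring_nf
  simp only [h]
  exact summable_geometric_of_lt_one (Real.exp_nonneg _)
    (Real.exp_lt_one_iff.2 (by linarith))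

lemma geom_exp_tsum_le {l : ℝ} (hl0 : 0 < l) (hl1 : l ≤ 1) :
    ∑' k : ℕ, Real.exp (-(l/2) * (k:ℝ)) ≤ 2 * Real.exp 1 / l := by
  have h : ∀ k : ℕ, Real.exp (-(l/2) * (k:ℝ)) = (Real.exp (-(l/2)))^k := by
    intro k; rw [← Real.exp_nat_mul]; ring_nf
  have hr1 : Real.exp (-(l/2)) < 1 := Real.exp_lt_one_iff.2 (by linarith)
  rw [tsum_congr h, tsum_geometric_of_lt_one (Real.exp_nonneg _) hr1]
  have key : (l/2) * Real.exp (-(l/2)) ≤ 1 - Real.exp (-(l/2)) := by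
    have := Real.add_one_le_exp (l/2)
    have h2 : Real.exp (-(l/2)) * Real.exp (l/2) = 1 := by
      rw [← Real.exp_add]; ring_nf; exact Real.exp_zero
    nlinarith [Real.exp_pos (-(l/2))]
  have hppos : (0:ℝ) < (l/2) * Real.exp (-(l/2)) := by positivity
  have step1 : (1 - Real.exp (-(l/2)))⁻¹ ≤ ((l/2) * Real.exp (-(l/2)))⁻¹ := by
    apply inv_anti₀ hppos key
  refine step1.trans ?_
  rw [mul_inv, ← Real.exp_neg]
  have e1 : (l/2)⁻¹ = 2/l := by field_simp
  rw [e1, neg_neg]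
  have e2 : Real.exp (l/2) ≤ Real.exp 1 := Real.exp_le_exp.2 (by linarith)
  calc 2/l * Real.exp (l/2) ≤ 2/l * Real.exp 1 := by
        apply mul_le_mul_of_nonneg_left e2 (by positivity)
    _ = 2 * Real.exp 1 / l := by ring

lemma pointwise_psi {l ρ : ℝ} (hl0 : 0 < l) (hρ0 : 0 ≤ ρ) (hρ : ρ ≤ Real.exp (-l)) (M k : ℕ) :
    ((k:ℝ)+2)^M * ρ^k ≤ (M.factorial : ℝ) * (2/l)^M * Real.exp l * Real.exp (-(l/2) * (k:ℝ)) := by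
  have h1 : ρ^k ≤ Real.exp (-(l*k)) := by
    calc ρ^k ≤ (Real.exp (-l))^k := pow_le_pow_left₀ hρ0 hρ k
      _ = Real.exp (-(l*k)) := by rw [← Real.exp_nat_mul]; ring_nf
  have h2 : ((k:ℝ)+2)^M ≤ (M.factorial : ℝ) * (2/l)^M * Real.exp (l*((k:ℝ)+2)/2) := by
    have hx : (0:ℝ) ≤ l*((k:ℝ)+2)/2 := by positivity
    have hfac := Real.pow_div_factorial_le_exp _ hx M
    rw [div_le_iff₀ (by positivity : (0:ℝ) < ((M.factorial : ℕ) : ℝ))] at hfac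
    have heq : ((k:ℝ)+2)^M = (2/l)^M * (l*((k:ℝ)+2)/2)^M := by
      rw [← mul_pow]
      congr 1
      field_simp
    rw [heq]
    calc (2/l)^M * (l*((k:ℝ)+2)/2)^M
        ≤ (2/l)^M * (Real.exp (l*((k:ℝ)+2)/2) * (M.factorial:ℝ)) := by
          apply mul_le_mul_of_nonneg_left hfac (by positivity)
      _ = (M.factorial : ℝ) * (2/l)^M * Real.exp (l*((k:ℝ)+2)/2) := by ring
  have h3 : Real.exp (l*((k:ℝ)+2)/2) * Real.exp (-(l*(k:ℝ))) = Real.exp l * Real.exp (-(l/2)*(k:ℝ)) := by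
    rw [← Real.exp_add, ← Real.exp_add]
    congr 1
    ring
  calc ((k:ℝ)+2)^M * ρ^k
      ≤ ((M.factorial : ℝ) * (2/l)^M * Real.exp (l*((k:ℝ)+2)/2)) * Real.exp (-(l*(k:ℝ))) := by
        apply mul_le_mul h2 h1 (by positivity) (by positivity)
    _ = (M.factorial : ℝ) * (2/l)^M * (Real.exp (l*((k:ℝ)+2)/2) * Real.exp (-(l*(k:ℝ)))) := by ring
    _ = (M.factorial : ℝ) * (2/l)^M * Real.exp l * Real.exp (-(l/2) * (k:ℝ)) := by rw [h3]; ring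
set_option maxHeartbeats 1600000 in
lemma per_n (Q : ℕ) (hQ : 2 ≤ Q) (c : ℝ) (hc : 0 < c) (m : ℕ)
    (n : ℕ) (h2n : 2 ≤ n)
    (hcl : c ≤ Real.log n) (h1l : 1 ≤ Real.log n)
    (hLl : Real.log (3*(Q:ℝ)*(n:ℝ)) ≤ 2 * Real.log n)
    (htail : ∀ k : ℕ, n ≤ k →
      ((k:ℝ)+2)^(m+2) * Real.exp (-(c*(k:ℝ))/Real.log (3*(Q:ℝ)*(k:ℝ))) ≤ (((k:ℝ)+1)^2)⁻¹) :
    |H2 Q c m n| ≤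
      (c * (Q:ℝ)^(m+1) * 2^(m+3) *
        ((((m+2).factorial : ℝ) * 2^(m+3) * Real.exp 1 * Real.exp 1 / c^(m+3))
          + ∑' k : ℕ, (((k:ℝ)+1)^2)⁻¹)) * (Real.log n)^m / n := by
  have hn1 : 1 ≤ n := by omega
  have hnR : (2:ℝ) ≤ (n:ℝ) := by exact_mod_cast h2n
  have hnpos : (0:ℝ) < n := by linarith
  have hQR : (2:ℝ) ≤ (Q:ℝ) := by exact_mod_cast hQ
  have hQpos : (0:ℝ) < Q := by linarith
  have hlogn : 0 < Real.log n := by linarith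
  -- cast facts about useq
  have hUge : ∀ j : ℕ, (n:ℝ) ≤ (useq Q (n+j) : ℝ) := by
    intro j
    have h := useq_ge hQ (show 1 ≤ n + j by omega)
    have : n ≤ useq Q (n+j) := le_trans (by omega) h
    exact_mod_cast this
  have hUgen : (n:ℝ) ≤ (useq Q n : ℝ) := by exact_mod_cast useq_ge hQ hn1
  have hUnpos : (0:ℝ) < (useq Q n : ℝ) := lt_of_lt_of_le hnpos hUgen
  have hUpos : ∀ j : ℕ, (0:ℝ) < (useq Q (n+j) : ℝ) := fun j => lt_of_lt_of_le hnpos (hUge j)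
  have hUnle : ∀ j : ℕ, (useq Q n : ℝ) ≤ (useq Q (n+j) : ℝ) := by
    intro j
    have := useq_mono hQ (a := 0) (b := j) hn1 (Nat.zero_le j)
    exact_mod_cast this
  have hUadd : ∀ j : ℕ, (useq Q (n+j) : ℝ) ≤ (useq Q n : ℝ) + (Q:ℝ)*j := by
    intro j
    have := useq_add_le hQ hn1 j
    exact_mod_cast this
  have hUleQn : (useq Q n : ℝ) ≤ (Q:ℝ) * n := by exact_mod_cast useq_le hQ hn1
  -- logs
  have hlogUn : Real.log n ≤ Real.log (useq Q n) := Real.log_le_log hnpos hUgen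
  have hlogU : ∀ j : ℕ, Real.log n ≤ Real.log (useq Q (n+j)) :=
    fun j => Real.log_le_log hnpos (hUge j)
  have hlogUnpos : 0 < Real.log (useq Q n) := lt_of_lt_of_le hlogn hlogUn
  have hlogUpos : ∀ j : ℕ, 0 < Real.log (useq Q (n+j)) :=
    fun j => lt_of_lt_of_le hlogn (hlogU j)
  have hlogUnle : ∀ j : ℕ, Real.log (useq Q n) ≤ Real.log (useq Q (n+j)) :=
    fun j => Real.log_le_log hUnpos (hUnle j)
  have hlogU_mono : ∀ i j : ℕ, i ≤ j → Real.log (useq Q (n+i)) ≤ Real.log (useq Q (n+j)) := by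
    intro i j hij
    have h := useq_mono hQ hn1 hij
    exact Real.log_le_log (hUpos i) (by exact_mod_cast h)
  -- L and l
  set L : ℝ := Real.log (3*(Q:ℝ)*(n:ℝ)) with hLdef
  have hlognL : Real.log n ≤ L := Real.log_le_log hnpos (by nlinarith)
  have hL1 : 1 ≤ L := le_trans h1l hlognL
  have hLpos : 0 < L := by linarith
  set l : ℝ := c / L with hldef
  have hl0 : 0 < l := by positivity
  have hl1 : l ≤ 1 := by
    rw [hldef, div_le_one hLpos]
    linarith
  -- b and a
  set b : ℝ := 1 - c / Real.log (useq Q n) with hbdef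
  have hb0 : 0 ≤ b := by
    rw [hbdef, sub_nonneg, div_le_one hlogUnpos]
    linarith
  have hba : ∀ j : ℕ, b ≤ 1 - c / Real.log (useq Q (n+j)) := by
    intro j
    rw [hbdef]
    apply sub_le_sub_left
    exact div_le_div_of_nonneg_left hc.le hlogUnpos (hlogUnle j)
  have ha1 : ∀ j : ℕ, 1 - c / Real.log (useq Q (n+j)) ≤ 1 := by
    intro j
    have : 0 ≤ c / Real.log (useq Q (n+j)) := le_of_lt (div_pos hc (hlogUpos j))
    linarith
  have ha_mono : ∀ i j : ℕ, i ≤ j →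
      1 - c / Real.log (useq Q (n+i)) ≤ 1 - c / Real.log (useq Q (n+j)) := by
    intro i j hij
    apply sub_le_sub_left
    exact div_le_div_of_nonneg_left hc.le (hlogUpos i) (hlogU_mono i j hij)
  -- difference bound
  have hd : ∀ k : ℕ, ∀ j ∈ Finset.Icc 1 (k+1),
      (1 - c / Real.log (useq Q (n+j))) - b
        ≤ c * ((Q:ℝ)*((k:ℝ)+1)) / ((n:ℝ) * (Real.log n)^2) := by
    intro k j hj
    simp only [Finset.mem_Icc] at hj
    set x := Real.log (useq Q n) with hxdef
    set y := Real.log (useq Q (n+j)) with hydef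
    have hx0 : 0 < x := hlogUnpos
    have hy0 : 0 < y := hlogUpos j
    have hxy : x ≤ y := hlogUnle j
    have hxl : Real.log n ≤ x := hlogUn
    have heq : (1 - c / y) - b = c * (y - x) / (x * y) := by
      rw [hbdef]
      field_simp
      ring
    rw [heq]
    -- y - x ≤ (U' - U)/U ≤ Q (k+1) / n
    have hyx : y - x ≤ ((useq Q (n+j) : ℝ) - (useq Q n : ℝ)) / (useq Q n : ℝ) := by
      have hdivpos : (0:ℝ) < (useq Q (n+j) : ℝ) / (useq Q n : ℝ) :=
        div_pos (hUpos j) hUnpos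
      have hlogdiv : Real.log ((useq Q (n+j) : ℝ) / (useq Q n : ℝ)) = y - x := by
        rw [Real.log_div (ne_of_gt (hUpos j)) (ne_of_gt hUnpos)]
      have h2 := Real.log_le_sub_one_of_pos hdivpos
      rw [hlogdiv] at h2
      have : (useq Q (n+j) : ℝ) / (useq Q n : ℝ) - 1
          = ((useq Q (n+j) : ℝ) - (useq Q n : ℝ)) / (useq Q n : ℝ) := by
        field_simp
      linarith [h2, this.symm.le, this.le]
    have hnum : (useq Q (n+j) : ℝ) - (useq Q n : ℝ) ≤ (Q:ℝ)*((k:ℝ)+1) := by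
      have h1 := hUadd j
      have hjk : (j:ℝ) ≤ (k:ℝ)+1 := by exact_mod_cast hj.2
      nlinarith
    have hyx2 : y - x ≤ ((Q:ℝ)*((k:ℝ)+1)) / (n:ℝ) := by
      refine hyx.trans ?_
      apply div_le_div₀ (by positivity) hnum hnpos hUgen
    have hden : (Real.log n)^2 ≤ x * y := by nlinarith
    calc c * (y - x) / (x * y) ≤ (c * ((Q:ℝ)*((k:ℝ)+1)/(n:ℝ))) / ((Real.log n)^2) := by
          apply div_le_div₀ (by positivity) ?_ (by positivity) hden
          apply mul_le_mul_of_nonneg_left hyx2 hc.le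
      _ = c * ((Q:ℝ)*((k:ℝ)+1)) / ((n:ℝ) * (Real.log n)^2) := by
          field_simp
  -- bracket bounds
  have hbrnn : ∀ k : ℕ,
      0 ≤ ∏ j ∈ Finset.Icc 1 (k+1), (1 - c / Real.log (useq Q (n+j))) - b^(k+1) := by
    intro k
    rw [sub_nonneg]
    exact pow_le_prod_Icc hb0 (k+1) (fun j _ => hba j)
  have hbrle : ∀ k : ℕ,
      ∏ j ∈ Finset.Icc 1 (k+1), (1 - c / Real.log (useq Q (n+j))) - b^(k+1)
        ≤ ((k:ℝ)+1) * (c * ((Q:ℝ)*((k:ℝ)+1)) / ((n:ℝ) * (Real.log n)^2))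
            * (1 - c / Real.log (useq Q (n+(k+1))))^k := by
    intro k
    have h := prod_sub_pow_le (a := fun j => 1 - c / Real.log (useq Q (n+j)))
      (b := b) (A := 1 - c / Real.log (useq Q (n+(k+1))))
      (d := c * ((Q:ℝ)*((k:ℝ)+1)) / ((n:ℝ) * (Real.log n)^2)) hb0 (ha1 (k+1)) (k+1)
      (by omega) (fun j _ => hba j)
      (fun j hj => ha_mono j (k+1) (by simp only [Finset.mem_Icc] at hj; omega))
      (hd k)
    have hidx : k + 1 - 1 = k := by omega
    rw [hidx] at h
    push_cast at h
    exact h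
  -- front factor bound
  have hfront : ∀ k : ℕ,
      ((useq Q (n+(k+2)) : ℝ) - (useq Q n : ℝ))^m / Real.log (useq Q (n+(k+2)))
        ≤ (Q:ℝ)^m * ((k:ℝ)+2)^m / Real.log n := by
    intro k
    have hnum0 : (0:ℝ) ≤ (useq Q (n+(k+2)) : ℝ) - (useq Q n : ℝ) := sub_nonneg.2 (hUnle (k+2))
    have hnum : ((useq Q (n+(k+2)) : ℝ) - (useq Q n : ℝ))^m ≤ ((Q:ℝ)*((k:ℝ)+2))^m := by
      apply pow_le_pow_left₀ hnum0
      have h1 := hUadd (k+2)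
      push_cast at h1
      linarith
    calc ((useq Q (n+(k+2)) : ℝ) - (useq Q n : ℝ))^m / Real.log (useq Q (n+(k+2)))
        ≤ ((Q:ℝ)*((k:ℝ)+2))^m / Real.log n := by
          apply div_le_div₀ (by positivity) hnum hlogn (hlogU (k+2))
      _ = (Q:ℝ)^m * ((k:ℝ)+2)^m / Real.log n := by rw [mul_pow]
  -- constants
  set Cn : ℝ := c * (Q:ℝ)^(m+1) / ((n:ℝ) * (Real.log n)^3) with hCndef
  have hCn0 : 0 ≤ Cn := by positivity
  set C0 : ℝ := (Nat.factorial (m+2) : ℝ) * (2/l)^(m+2) * Real.exp l with hC0def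
  have hC00 : 0 ≤ C0 := by positivity
  set ψ : ℕ → ℝ := fun k => C0 * Real.exp (-(l/2) * (k:ℝ)) with hψdef
  set ι : ℕ → ℝ := fun k => (((k:ℝ)+1)^2)⁻¹ with hιdef
  have hψ0 : ∀ k, 0 ≤ ψ k := fun k => mul_nonneg hC00 (Real.exp_nonneg _)
  have hι0 : ∀ k : ℕ, 0 ≤ ι k := fun k => by rw [hιdef]; positivity
  set f : ℕ → ℝ := fun k =>
    (((useq Q (n + (k + 2)) : ℝ) - (useq Q n : ℝ)) ^ m / Real.log (useq Q (n + (k + 2)))) *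
      (∏ j ∈ Finset.Icc 1 (k + 1), (1 - c / Real.log (useq Q (n + j))) - b ^ (k + 1)) with hfdef
  have hf0 : ∀ k, 0 ≤ f k := fun k =>
    mul_nonneg (div_nonneg (pow_nonneg (sub_nonneg.2 (hUnle (k+2))) m) (hlogUpos (k+2)).le)
      (hbrnn k)
  -- pointwise bound
  have hterm : ∀ k : ℕ, f k ≤ Cn * (ψ k + ι k) := by
    intro k
    set A : ℝ := 1 - c / Real.log (useq Q (n+(k+1))) with hAdef
    have hA0 : 0 ≤ A := le_trans hb0 (hba (k+1))
    have hAk0 : 0 ≤ A^k := pow_nonneg hA0 k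
    have e1 : f k ≤ ((Q:ℝ)^m * ((k:ℝ)+2)^m / Real.log n) *
        (((k:ℝ)+1) * (c * ((Q:ℝ)*((k:ℝ)+1)) / ((n:ℝ) * (Real.log n)^2)) * A^k) := by
      apply mul_le_mul (hfront k) (hbrle k) (hbrnn k) (by positivity)
    have e2 : ((Q:ℝ)^m * ((k:ℝ)+2)^m / Real.log n) *
        (((k:ℝ)+1) * (c * ((Q:ℝ)*((k:ℝ)+1)) / ((n:ℝ) * (Real.log n)^2)) * A^k)
        = Cn * (((k:ℝ)+2)^m * ((k:ℝ)+1)^2 * A^k) := by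
      rw [hCndef]
      have hQm : (Q:ℝ)^(m+1) = (Q:ℝ)^m * (Q:ℝ) := by rw [pow_succ]
      rw [hQm]
      field_simp
    have e3 : Cn * (((k:ℝ)+2)^m * ((k:ℝ)+1)^2 * A^k) ≤ Cn * (((k:ℝ)+2)^(m+2) * A^k) := by
      refine mul_le_mul_of_nonneg_left ?_ hCn0
      refine mul_le_mul_of_nonneg_right ?_ hAk0
      have hpe : ((k:ℝ)+2)^(m+2) = ((k:ℝ)+2)^m * ((k:ℝ)+2)^2 := by rw [pow_add]
      rw [hpe]
      have h9 : (0:ℝ) ≤ ((k:ℝ)+2)^m := by positivity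
      have h10 : ((k:ℝ)+1)^2 ≤ ((k:ℝ)+2)^2 := by nlinarith [(Nat.cast_nonneg k : (0:ℝ) ≤ (k:ℝ))]
      exact mul_le_mul_of_nonneg_left h10 h9
    have e4 : ((k:ℝ)+2)^(m+2) * A^k ≤ ψ k + ι k := by
      rcases le_or_gt k n with hkn | hkn
      · -- k ≤ n : use the geometric part
        have hknR : (k:ℝ) ≤ (n:ℝ) := by exact_mod_cast hkn
        have hU3 : (useq Q (n+(k+1)) : ℝ) ≤ 3*(Q:ℝ)*n := by
          have h1 := hUadd (k+1)
          push_cast at h1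
          nlinarith [hUleQn]
        have hlogU3 : Real.log (useq Q (n+(k+1))) ≤ L :=
          Real.log_le_log (hUpos (k+1)) hU3
        have hAl : A ≤ 1 - l := by
          rw [hAdef, hldef]
          apply sub_le_sub_left
          exact div_le_div_of_nonneg_left hc.le (hlogUpos (k+1)) hlogU3
        have hAexp : A ≤ Real.exp (-l) := by
          have := Real.add_one_le_exp (-l)
          linarith
        have hpsi := pointwise_psi hl0 hA0 hAexp (m+2) k
        have : ((k:ℝ)+2)^(m+2) * A^k ≤ ψ k := by
          rw [hψdef, hC0def]
          calc ((k:ℝ)+2)^(m+2) * A^k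
              ≤ ((m+2).factorial : ℝ) * (2/l)^(m+2) * Real.exp l * Real.exp (-(l/2) * (k:ℝ)) := hpsi
            _ = (Nat.factorial (m+2) : ℝ) * (2/l)^(m+2) * Real.exp l * Real.exp (-(l/2) * (k:ℝ)) := rfl
        linarith [hι0 k]
      · -- n < k : use the tail part
        have hknR : (n:ℝ) < (k:ℝ) := by exact_mod_cast hkn
        have hU3 : (useq Q (n+(k+1)) : ℝ) ≤ 3*(Q:ℝ)*k := by
          have h1 := hUadd (k+1)
          push_cast at h1
          nlinarith [hUleQn]
        have hlog3k0 : (0:ℝ) < Real.log (3*(Q:ℝ)*(k:ℝ)) := by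
          apply Real.log_pos
          nlinarith
        have hlogU3 : Real.log (useq Q (n+(k+1))) ≤ Real.log (3*(Q:ℝ)*(k:ℝ)) :=
          Real.log_le_log (hUpos (k+1)) hU3
        have hAl : A ≤ 1 - c / Real.log (3*(Q:ℝ)*(k:ℝ)) := by
          rw [hAdef]
          apply sub_le_sub_left
          exact div_le_div_of_nonneg_left hc.le (hlogUpos (k+1)) hlogU3
        have hAexp : A ≤ Real.exp (-(c / Real.log (3*(Q:ℝ)*(k:ℝ)))) := by
          have := Real.add_one_le_exp (-(c / Real.log (3*(Q:ℝ)*(k:ℝ))))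
          linarith
        have hAk : A^k ≤ Real.exp (-(c*(k:ℝ))/Real.log (3*(Q:ℝ)*(k:ℝ))) := by
          calc A^k ≤ (Real.exp (-(c / Real.log (3*(Q:ℝ)*(k:ℝ)))))^k :=
                pow_le_pow_left₀ hA0 hAexp k
            _ = Real.exp (-(c*(k:ℝ))/Real.log (3*(Q:ℝ)*(k:ℝ))) := by
                rw [← Real.exp_nat_mul]
                congr 1
                ring
        have htl := htail k hkn.le
        calc ((k:ℝ)+2)^(m+2) * A^k
            ≤ ((k:ℝ)+2)^(m+2) * Real.exp (-(c*(k:ℝ))/Real.log (3*(Q:ℝ)*(k:ℝ))) :=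
              mul_le_mul_of_nonneg_left hAk (by positivity)
          _ ≤ ι k := htl
          _ ≤ ψ k + ι k := le_add_of_nonneg_left (hψ0 k)
    calc f k ≤ ((Q:ℝ)^m * ((k:ℝ)+2)^m / Real.log n) *
        (((k:ℝ)+1) * (c * ((Q:ℝ)*((k:ℝ)+1)) / ((n:ℝ) * (Real.log n)^2)) * A^k) := e1
      _ = Cn * (((k:ℝ)+2)^m * ((k:ℝ)+1)^2 * A^k) := e2
      _ ≤ Cn * (((k:ℝ)+2)^(m+2) * A^k) := e3
      _ ≤ Cn * (ψ k + ι k) := mul_le_mul_of_nonneg_left e4 hCn0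
  -- summability
  have hψs : Summable ψ := by
    rw [hψdef]
    exact (geom_exp_summable hl0).mul_left C0
  have hιs : Summable ι := by
    have h1 : Summable (fun k : ℕ => (((k:ℝ))^2)⁻¹) := Real.summable_nat_pow_inv.2 (by norm_num)
    have h2 := (summable_nat_add_iff 1).2 h1
    rw [hιdef]
    apply h2.congr
    intro k
    push_cast
    try ring
  have hgs : Summable (fun k => Cn * (ψ k + ι k)) := ((hψs.add hιs).mul_left Cn)
  have hfs : Summable f := Summable.of_nonneg_of_le hf0 hterm hgs
  -- tsum bounds
  have h7 : |H2 Q c m n| = ∑' k, f k := by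
    have h6 : H2 Q c m n = ∑' k, f k := rfl
    rw [h6, abs_of_nonneg (tsum_nonneg hf0)]
  have h8 : ∑' k, f k ≤ Cn * (∑' k, ψ k + ∑' k, ι k) := by
    calc ∑' k, f k ≤ ∑' k, Cn * (ψ k + ι k) := Summable.tsum_le_tsum hterm hfs hgs
      _ = Cn * (∑' k, (ψ k + ι k)) := tsum_mul_left
      _ = Cn * (∑' k, ψ k + ∑' k, ι k) := by rw [Summable.tsum_add hψs hιs]
  have hψsum : ∑' k, ψ k ≤ C0 * (2 * Real.exp 1 / l) := by
    rw [hψdef]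
    rw [tsum_mul_left]
    exact mul_le_mul_of_nonneg_left (geom_exp_tsum_le hl0 hl1) hC00
  have hC0le : C0 * (2 * Real.exp 1 / l)
      ≤ (((m+2).factorial : ℝ) * 2^(m+3) * Real.exp 1 * Real.exp 1 / c^(m+3)) * L^(m+3) := by
    have h2l : (2/l) = 2*L/c := by
      rw [hldef]
      field_simp
    have key : C0 * (2 * Real.exp 1 / l)
        = ((Nat.factorial (m+2) : ℝ) * (2^(m+3) * L^(m+3) / c^(m+3)) * Real.exp 1) * Real.exp l := by
      rw [hC0def]
      have e5 : (2/l)^(m+2) * (2/l) = (2/l)^(m+3) := by rw [← pow_succ]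
      have e6 : (2/l)^(m+3) = 2^(m+3) * L^(m+3) / c^(m+3) := by
        rw [h2l, div_pow, mul_pow]
      calc (Nat.factorial (m+2) : ℝ) * (2/l)^(m+2) * Real.exp l * (2 * Real.exp 1 / l)
          = (Nat.factorial (m+2) : ℝ) * ((2/l)^(m+2) * (2/l)) * Real.exp 1 * Real.exp l := by
            ring
        _ = ((Nat.factorial (m+2) : ℝ) * (2^(m+3) * L^(m+3) / c^(m+3)) * Real.exp 1) * Real.exp l := by
            rw [e5, e6]
            try ring
    rw [key]
    have hexpl : Real.exp l ≤ Real.exp 1 := Real.exp_le_exp.2 hl1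
    calc ((Nat.factorial (m+2) : ℝ) * (2^(m+3) * L^(m+3) / c^(m+3)) * Real.exp 1) * Real.exp l
        ≤ ((Nat.factorial (m+2) : ℝ) * (2^(m+3) * L^(m+3) / c^(m+3)) * Real.exp 1) * Real.exp 1 := by
          apply mul_le_mul_of_nonneg_left hexpl (by positivity)
      _ = (((m+2).factorial : ℝ) * 2^(m+3) * Real.exp 1 * Real.exp 1 / c^(m+3)) * L^(m+3) := by
          ring
  have hCι0 : 0 ≤ ∑' k, ι k := tsum_nonneg hι0
  have hLpow : (1:ℝ) ≤ L^(m+3) := one_le_pow₀ hL1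
  -- final chain
  rw [h7]
  set D1 : ℝ := ((m+2).factorial : ℝ) * 2^(m+3) * Real.exp 1 * Real.exp 1 / c^(m+3) with hD1def
  have hD10 : 0 ≤ D1 := by positivity
  have main1 : ∑' k, f k ≤ Cn * (D1 + ∑' k, ι k) * L^(m+3) := by
    calc ∑' k, f k ≤ Cn * (∑' k, ψ k + ∑' k, ι k) := h8
      _ ≤ Cn * (D1 * L^(m+3) + ∑' k, ι k) := by
          refine mul_le_mul_of_nonneg_left ?_ hCn0
          have := le_trans hψsum hC0le
          linarith
      _ ≤ Cn * (D1 * L^(m+3) + (∑' k, ι k) * L^(m+3)) := by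
          refine mul_le_mul_of_nonneg_left ?_ hCn0
          have : ∑' k, ι k ≤ (∑' k, ι k) * L^(m+3) := le_mul_of_one_le_right hCι0 hLpow
          linarith
      _ = Cn * (D1 + ∑' k, ι k) * L^(m+3) := by ring
  have main2 : Cn * (D1 + ∑' k, ι k) * L^(m+3)
      ≤ Cn * (D1 + ∑' k, ι k) * (2 * Real.log n)^(m+3) := by
    refine mul_le_mul_of_nonneg_left ?_ (by positivity)
    exact pow_le_pow_left₀ hLpos.le hLl _
  have main3 : Cn * (D1 + ∑' k, ι k) * (2 * Real.log n)^(m+3)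
      = (c * (Q:ℝ)^(m+1) * 2^(m+3) * (D1 + ∑' k, ι k)) * (Real.log n)^m / n := by
    rw [hCndef, mul_pow]
    have hp : (Real.log n)^(m+3) = (Real.log n)^m * (Real.log n)^3 := by rw [pow_add]
    rw [hp]
    field_simp
  calc ∑' k, f k ≤ Cn * (D1 + ∑' k, ι k) * L^(m+3) := main1
    _ ≤ Cn * (D1 + ∑' k, ι k) * (2 * Real.log n)^(m+3) := main2
    _ = (c * (Q:ℝ)^(m+1) * 2^(m+3) * (D1 + ∑' k, ι k)) * (Real.log n)^m / n := main3

/-- `H₂^m(n) = O((log n)^{m+ε} / n)` for every `ε > 0`. -/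
theorem H2_isBigO (Q : ℕ) (hQ : 2 ≤ Q) (c : ℝ) (hc : 0 < c) (m : ℕ) (hm : 1 ≤ m)
    (ε : ℝ) (hε : 0 < ε) :
    (fun n : ℕ => H2 Q c m n) =O[Filter.atTop]
      fun n : ℕ => (Real.log n) ^ ((m : ℝ) + ε) / (n : ℝ) := by
  rw [Asymptotics.isBigO_iff]
  refine ⟨c * (Q:ℝ)^(m+1) * 2^(m+3) *
      ((((m+2).factorial : ℝ) * 2^(m+3) * Real.exp 1 * Real.exp 1 / c^(m+3))
        + ∑' k : ℕ, (((k:ℝ)+1)^2)⁻¹), ?_⟩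
  obtain ⟨K₀, hK₀⟩ := Filter.eventually_atTop.1 (tail_bound Q hQ c hc (m+2))
  have hlogtend : Filter.Tendsto (fun n : ℕ => Real.log n) atTop atTop :=
    Real.tendsto_log_atTop.comp tendsto_natCast_atTop_atTop
  filter_upwards [eventually_ge_atTop 2, eventually_ge_atTop K₀,
    hlogtend.eventually_ge_atTop (max c 1),
    hlogtend.eventually_ge_atTop (Real.log (3*(Q:ℝ)))] with n hn2 hnK hlog1 hlog2
  have hcl : c ≤ Real.log n := le_trans (le_max_left _ _) hlog1
  have h1l : (1:ℝ) ≤ Real.log n := le_trans (le_max_right _ _) hlog1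
  have hnR : (2:ℝ) ≤ (n:ℝ) := by exact_mod_cast hn2
  have hnpos : (0:ℝ) < n := by linarith
  have hQpos : (0:ℝ) < Q := by
    have : (2:ℝ) ≤ (Q:ℝ) := by exact_mod_cast hQ
    linarith
  have hLl : Real.log (3*(Q:ℝ)*(n:ℝ)) ≤ 2 * Real.log n := by
    rw [Real.log_mul (by positivity) (by positivity)]
    linarith
  have htail : ∀ k : ℕ, n ≤ k →
      ((k:ℝ)+2)^(m+2) * Real.exp (-(c*(k:ℝ))/Real.log (3*(Q:ℝ)*(k:ℝ))) ≤ (((k:ℝ)+1)^2)⁻¹ :=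
    fun k hk => hK₀ k (le_trans hnK hk)
  have hper := per_n Q hQ c hc m n hn2 hcl h1l hLl htail
  have hC0 : (0:ℝ) ≤ c * (Q:ℝ)^(m+1) * 2^(m+3) *
      ((((m+2).factorial : ℝ) * 2^(m+3) * Real.exp 1 * Real.exp 1 / c^(m+3))
        + ∑' k : ℕ, (((k:ℝ)+1)^2)⁻¹) := by
    have h1 : (0:ℝ) ≤ ∑' k : ℕ, (((k:ℝ)+1)^2)⁻¹ := tsum_nonneg (fun k => by positivity)
    have h2 : (0:ℝ) ≤ ((m+2).factorial : ℝ) * 2^(m+3) * Real.exp 1 * Real.exp 1 / c^(m+3) := by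
      positivity
    have h3 : (0:ℝ) ≤ c * (Q:ℝ)^(m+1) * 2^(m+3) := by positivity
    exact mul_nonneg h3 (by linarith)
  have hlog0 : (0:ℝ) ≤ Real.log n := by linarith
  have hpow : (Real.log n)^m ≤ Real.log n ^ ((m:ℝ)+ε) := by
    rw [← Real.rpow_natCast (Real.log (n:ℝ)) m]
    apply Real.rpow_le_rpow_of_exponent_le h1l
    linarith
  have hrhs : ‖Real.log (n:ℝ) ^ ((m:ℝ)+ε) / (n:ℝ)‖ = Real.log (n:ℝ) ^ ((m:ℝ)+ε) / (n:ℝ) := by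
    rw [Real.norm_eq_abs]
    exact abs_of_nonneg (div_nonneg (Real.rpow_nonneg hlog0 _) hnpos.le)
  rw [Real.norm_eq_abs, hrhs]
  calc |H2 Q c m n| ≤ (c * (Q:ℝ)^(m+1) * 2^(m+3) *
        ((((m+2).factorial : ℝ) * 2^(m+3) * Real.exp 1 * Real.exp 1 / c^(m+3))
          + ∑' k : ℕ, (((k:ℝ)+1)^2)⁻¹)) * (Real.log n)^m / n := hper
    _ ≤ (c * (Q:ℝ)^(m+1) * 2^(m+3) *
        ((((m+2).factorial : ℝ) * 2^(m+3) * Real.exp 1 * Real.exp 1 / c^(m+3))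
          + ∑' k : ℕ, (((k:ℝ)+1)^2)⁻¹)) * (Real.log (n:ℝ) ^ ((m:ℝ)+ε) / (n:ℝ)) := by
        rw [mul_div_assoc]
        refine mul_le_mul_of_nonneg_left ?_ hC0
        exact div_le_div_of_nonneg_right hpow hnpos.le
end

section
/- Fix an integer Q ≥ 2 and an index i ≥ 1, and let s be the least positive residue of u_i modulo Q. Then Σ_{h=1}^{φ(Q)} ((u_{i+h} − u_i)/Q − h/φ(Q)) = −(φ(Q) + 1)/2 + (1/Q) · Σ_{t = 1,...,Q, gcd(t,Q) = 1} ⟨t − s⟩_Q, where φ is Euler's totient function and ⟨n⟩_Q denotes the unique integer in [1, Q] congruent to n mod Q. -/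
def pco (Q : ℕ) : ℕ → Prop := fun m => 0 < m ∧ Nat.Coprime m Q

instance (Q : ℕ) : DecidablePred (pco Q) := fun m =>
  inferInstanceAs (Decidable (0 < m ∧ Nat.Coprime m Q))

lemma pco_infinite (Q : ℕ) (hQ : 0 < Q) : (setOf (pco Q)).Infinite := by
  apply Set.infinite_of_injective_forall_mem (f := fun k : ℕ => 1 + Q * k)
  · intro a b hab
    simp only [add_right_inj] at hab
    exact Nat.eq_of_mul_eq_mul_left hQ hab
  · intro k
    exact ⟨by positivity, (Nat.coprime_add_mul_left_left 1 Q k).mpr (Nat.coprime_one_left Q)⟩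

lemma coprime_mod_iff (Q x : ℕ) : Nat.Coprime (x % Q) Q ↔ Nat.Coprime x Q := by
  rw [Nat.Coprime, Nat.Coprime]
  conv_rhs => rw [Nat.gcd_comm, Nat.gcd_rec]

lemma count_pco_add (Q a : ℕ) (ha : 0 < a) :
    Nat.count (pco Q) (a + Q) = Nat.count (pco Q) a + Nat.totient Q := by
  rw [Nat.count_add]
  congr 1
  rw [Nat.count_eq_card_filter_range, ← Nat.filter_coprime_Ico_eq_totient Q a]
  apply Finset.card_bij (fun k _ => a + k)
  · intro k hk
    rw [Finset.mem_filter, Finset.mem_range] at hk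
    simp only [pco] at hk
    simp only [Finset.mem_filter, Finset.mem_Ico]
    exact ⟨⟨Nat.le_add_right a k, by omega⟩, (hk.2.2).symm⟩
  · intro k _ k' _ h; omega
  · intro x hx
    simp only [Finset.mem_filter, Finset.mem_Ico] at hx
    refine ⟨x - a, ?_, by omega⟩
    rw [Finset.mem_filter, Finset.mem_range]
    simp only [pco]
    have : a + (x - a) = x := by omega
    rw [this]
    exact ⟨by omega, by omega, hx.2.symm⟩

/-- The least positive residue of `n` modulo `Q`: the unique integer in `[1, Q]`
congruent to `n` mod `Q` (for `Q ≥ 1`). -/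
def lpr (Q : ℕ) (n : ℤ) : ℤ := (n - 1) % Q + 1

lemma lpr_pos {Q : ℕ} (hQ : 0 < Q) (n : ℤ) : 1 ≤ lpr Q n := by
  have := Int.emod_nonneg (n - 1) (by exact_mod_cast hQ.ne' : (Q:ℤ) ≠ 0)
  unfold lpr; omega

lemma lpr_le {Q : ℕ} (hQ : 0 < Q) (n : ℤ) : lpr Q n ≤ Q := by
  have := Int.emod_lt_of_pos (n - 1) (by exact_mod_cast hQ : (0:ℤ) < Q)
  unfold lpr; omega

lemma lpr_modeq (Q : ℕ) (n : ℤ) : lpr Q n ≡ n [ZMOD Q] := by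
  have h : (n - 1) % Q ≡ n - 1 [ZMOD Q] := Int.emod_emod_of_dvd _ dvd_rfl
  simpa [lpr] using h.add_right 1

lemma lpr_unique {Q : ℕ} (hQ : 0 < Q) {m n : ℤ} (h1 : 1 ≤ m) (h2 : m ≤ Q)
    (h : m ≡ n [ZMOD Q]) : m = lpr Q n := by
  have e1 : (m - 1) % Q = (n - 1) % Q := h.sub_right 1
  have e2 : (m - 1) % Q = m - 1 :=
    Int.emod_eq_of_lt (by omega) (by omega)
  unfold lpr; omega

lemma coprime_of_modeq {Q a t : ℕ} (h : (a:ℤ) ≡ (t:ℤ) [ZMOD Q])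
    (ht : Nat.Coprime t Q) : Nat.Coprime a Q := by
  rw [← coprime_mod_iff] at ht ⊢
  have h2 : ((a % Q : ℕ) : ℤ) = ((t % Q : ℕ) : ℤ) := by
    push_cast
    exact h
  have : a % Q = t % Q := by exact_mod_cast h2
  rwa [this]

lemma gauss_Icc (n : ℕ) : (∑ h ∈ Finset.Icc 1 n, (h:ℚ)) = n * (n+1) / 2 := by
  induction n with
  | zero => simp
  | succ k ih =>
    rw [Finset.sum_Icc_succ_top (by omega), ih]
    push_cast
    ring

/-- With `s` the least positive residue of `u_i` mod `Q`,
`Σ_{h=1}^{φ(Q)} ((u_{i+h} - u_i)/Q - h/φ(Q)) = -(φ(Q)+1)/2 + (1/Q) Σ_{t=1..Q, gcd(t,Q)=1} ⟨t-s⟩_Q`. -/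
theorem useq_window_sum (Q : ℕ) (hQ : 2 ≤ Q) (i : ℕ) (hi : 1 ≤ i) :
    ∑ h ∈ Finset.Icc 1 (Nat.totient Q),
        (((useq Q (i + h) : ℚ) - (useq Q i : ℚ)) / (Q : ℚ)
          - (h : ℚ) / (Nat.totient Q : ℚ)) =
      -(((Nat.totient Q : ℚ) + 1) / 2) +
        (1 / (Q : ℚ)) * ∑ t ∈ Finset.Icc 1 Q,
          (if Nat.gcd t Q = 1 then (lpr Q ((t : ℤ) - lpr Q (useq Q i : ℤ)) : ℚ) else 0) := by
  have hQ0 : 0 < Q := by omega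
  set φ := Nat.totient Q with hφ
  have hφ0 : 0 < φ := Nat.totient_pos.mpr hQ0
  have inf : (setOf (pco Q)).Infinite := pco_infinite Q hQ0
  have huseq : ∀ n : ℕ, useq Q n = Nat.nth (pco Q) (n - 1) := fun n => rfl
  set a := useq Q i with ha
  have pa : pco Q a := Nat.nth_mem_of_infinite inf (i - 1)
  have ha1 : 1 ≤ a := pa.1
  have ca : Nat.count (pco Q) a = i - 1 := Nat.count_nth_of_infinite inf (i - 1)
  have caQ : Nat.count (pco Q) (a + Q) = i - 1 + φ := by
    rw [count_pco_add Q a ha1, ca]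
  have paQ : pco Q (a + Q) := ⟨by omega, Nat.coprime_add_self_left.mpr pa.2⟩
  have caQ1 : Nat.count (pco Q) (a + Q + 1) = i + φ := by
    rw [Nat.count_succ, caQ, if_pos paQ]; omega
  have ca1 : Nat.count (pco Q) (a + 1) = i := by
    rw [Nat.count_succ, ca, if_pos pa]; omega
  set S : Finset ℕ := (Finset.Icc 1 Q).filter (fun d => Nat.Coprime (a + d) Q) with hS
  have key1 : ∀ h ∈ Finset.Icc 1 φ, a < useq Q (i+h) ∧ useq Q (i+h) ≤ a + Q := by
    intro h hh
    simp only [Finset.mem_Icc] at hh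
    have e : i + h - 1 = (i-1) + h := by omega
    constructor
    · have h1 : Nat.nth (pco Q) (i-1) < Nat.nth (pco Q) ((i-1)+h) :=
        (Nat.nth_lt_nth inf).mpr (by omega)
      rw [huseq, e]
      exact h1
    · have h1 : (i-1) + h < Nat.count (pco Q) (a + Q + 1) := by omega
      have h2 := (Nat.lt_nth_iff_count_lt inf).mp h1
      rw [huseq, e]
      omega
  -- sum over window equals sum over S
  have sum1 : (∑ h ∈ Finset.Icc 1 φ, ((useq Q (i+h) : ℚ) - (a:ℚ))) = ∑ d ∈ S, (d:ℚ) := by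
    refine Finset.sum_nbij' (i := fun h => useq Q (i+h) - a)
      (j := fun d => Nat.count (pco Q) (a + d) - (i - 1)) ?_ ?_ ?_ ?_ ?_
    · intro h hh
      obtain ⟨h1, h2⟩ := key1 h hh
      simp only [Finset.mem_Icc] at hh
      simp only [hS, Finset.mem_filter, Finset.mem_Icc]
      refine ⟨⟨by omega, by omega⟩, ?_⟩
      have e : a + (useq Q (i+h) - a) = useq Q (i+h) := by omega
      rw [e]
      exact (Nat.nth_mem_of_infinite inf (i + h - 1)).2
    · intro d hd
      simp only [hS, Finset.mem_filter, Finset.mem_Icc] at hd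
      have hj1 : i ≤ Nat.count (pco Q) (a + d) := by
        have := Nat.count_monotone (pco Q) (show a + 1 ≤ a + d by omega)
        omega
      have hj2 : Nat.count (pco Q) (a + d) ≤ i - 1 + φ := by
        have := Nat.count_monotone (pco Q) (show a + d ≤ a + Q by omega)
        omega
      simp only [Finset.mem_Icc]
      omega
    · intro h hh
      obtain ⟨h1, h2⟩ := key1 h hh
      simp only [Finset.mem_Icc] at hh
      have e : a + (useq Q (i+h) - a) = useq Q (i+h) := by omega
      have e2 : i + h - 1 = (i-1) + h := by omega
      show Nat.count (pco Q) (a + (useq Q (i+h) - a)) - (i-1) = h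
      rw [e, huseq (i+h), e2, Nat.count_nth_of_infinite inf]
      omega
    · intro d hd
      simp only [hS, Finset.mem_filter, Finset.mem_Icc] at hd
      have pm : pco Q (a + d) := ⟨by omega, hd.2⟩
      have hj1 : i ≤ Nat.count (pco Q) (a + d) := by
        have := Nat.count_monotone (pco Q) (show a + 1 ≤ a + d by omega)
        omega
      have e : i + (Nat.count (pco Q) (a + d) - (i-1)) - 1 = Nat.count (pco Q) (a + d) := by
        omega
      show useq Q (i + (Nat.count (pco Q) (a + d) - (i - 1))) - a = d
      rw [huseq, e, Nat.nth_count pm]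
      omega
    · intro h hh
      obtain ⟨h1, h2⟩ := key1 h hh
      have : ((useq Q (i+h) - a : ℕ) : ℚ) = (useq Q (i+h) : ℚ) - (a:ℚ) := by
        push_cast [Nat.cast_sub h1.le]
        ring
      exact this.symm
  -- sum over coprime residues equals sum over S
  set s : ℤ := lpr Q (a : ℤ) with hs
  have hsa : (a : ℤ) ≡ s [ZMOD Q] := (lpr_modeq Q (a:ℤ)).symm
  have sum2 : (∑ t ∈ (Finset.Icc 1 Q).filter (fun t => Nat.gcd t Q = 1),
      (lpr Q ((t:ℤ) - s) : ℚ)) = ∑ d ∈ S, (d:ℚ) := by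
    refine Finset.sum_nbij' (i := fun t => (lpr Q ((t:ℤ) - s)).toNat)
      (j := fun d => (lpr Q (s + (d:ℤ))).toNat) ?_ ?_ ?_ ?_ ?_
    · intro t ht
      simp only [Finset.mem_filter, Finset.mem_Icc] at ht
      have hd1 := lpr_pos hQ0 ((t:ℤ) - s)
      have hd2 := lpr_le hQ0 ((t:ℤ) - s)
      have hdt : ((lpr Q ((t:ℤ) - s)).toNat : ℤ) = lpr Q ((t:ℤ) - s) :=
        Int.toNat_of_nonneg (by omega)
      simp only [hS, Finset.mem_filter, Finset.mem_Icc]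
      refine ⟨⟨by omega, by omega⟩, ?_⟩
      have hmod : ((a + (lpr Q ((t:ℤ) - s)).toNat : ℕ) : ℤ) ≡ (t:ℤ) [ZMOD Q] := by
        push_cast [hdt]
        calc (a:ℤ) + lpr Q ((t:ℤ) - s) ≡ s + ((t:ℤ) - s) [ZMOD Q] :=
              Int.ModEq.add hsa (lpr_modeq Q _)
          _ = (t:ℤ) := by ring
      exact coprime_of_modeq hmod ht.2
    · intro d hd
      simp only [hS, Finset.mem_filter, Finset.mem_Icc] at hd
      have hd1 := lpr_pos hQ0 (s + (d:ℤ))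
      have hd2 := lpr_le hQ0 (s + (d:ℤ))
      have hdt : ((lpr Q (s + (d:ℤ))).toNat : ℤ) = lpr Q (s + (d:ℤ)) :=
        Int.toNat_of_nonneg (by omega)
      simp only [Finset.mem_filter, Finset.mem_Icc]
      refine ⟨⟨by omega, by omega⟩, ?_⟩
      have hmod : (((lpr Q (s + (d:ℤ))).toNat : ℕ) : ℤ) ≡ ((a + d : ℕ) : ℤ) [ZMOD Q] := by
        push_cast [hdt]
        calc lpr Q (s + (d:ℤ)) ≡ s + (d:ℤ) [ZMOD Q] := lpr_modeq Q _
          _ ≡ (a:ℤ) + (d:ℤ) [ZMOD Q] := Int.ModEq.add hsa.symm (Int.ModEq.refl _)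
      exact coprime_of_modeq hmod hd.2
    · intro t ht
      simp only [Finset.mem_filter, Finset.mem_Icc] at ht
      have hd1 := lpr_pos hQ0 ((t:ℤ) - s)
      have hdt : ((lpr Q ((t:ℤ) - s)).toNat : ℤ) = lpr Q ((t:ℤ) - s) :=
        Int.toNat_of_nonneg (by omega)
      have huniq : (t:ℤ) = lpr Q (s + ((lpr Q ((t:ℤ) - s)).toNat : ℤ)) := by
        apply lpr_unique hQ0 (by exact_mod_cast ht.1.1) (by exact_mod_cast ht.1.2)
        rw [hdt]
        calc (t:ℤ) = s + ((t:ℤ) - s) := by ring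
          _ ≡ s + lpr Q ((t:ℤ) - s) [ZMOD Q] :=
              Int.ModEq.add (Int.ModEq.refl _) (lpr_modeq Q _).symm
      show (lpr Q (s + ((lpr Q ((t:ℤ) - s)).toNat : ℤ))).toNat = t
      omega
    · intro d hd
      simp only [hS, Finset.mem_filter, Finset.mem_Icc] at hd
      have hd1 := lpr_pos hQ0 (s + (d:ℤ))
      have hdt : ((lpr Q (s + (d:ℤ))).toNat : ℤ) = lpr Q (s + (d:ℤ)) :=
        Int.toNat_of_nonneg (by omega)
      have huniq : (d:ℤ) = lpr Q (((lpr Q (s + (d:ℤ))).toNat : ℤ) - s) := by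
        apply lpr_unique hQ0 (by exact_mod_cast hd.1.1) (by exact_mod_cast hd.1.2)
        rw [hdt]
        have : lpr Q (s + (d:ℤ)) ≡ s + (d:ℤ) [ZMOD Q] := lpr_modeq Q _
        calc (d:ℤ) = (s + (d:ℤ)) - s := by ring
          _ ≡ lpr Q (s + (d:ℤ)) - s [ZMOD Q] := Int.ModEq.sub this.symm (Int.ModEq.refl _)
      show (lpr Q (((lpr Q (s + (d:ℤ))).toNat : ℤ) - s)).toNat = d
      omega
    · intro t ht
      have hd1 := lpr_pos hQ0 ((t:ℤ) - s)
      have hdt : ((lpr Q ((t:ℤ) - s)).toNat : ℤ) = lpr Q ((t:ℤ) - s) :=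
        Int.toNat_of_nonneg (by omega)
      show (lpr Q ((t:ℤ) - s) : ℚ) = (((lpr Q ((t:ℤ) - s)).toNat : ℕ) : ℚ)
      rw [← hdt]
      norm_cast
  -- assemble
  have hsplit : ∑ h ∈ Finset.Icc 1 φ,
      (((useq Q (i + h) : ℚ) - (a : ℚ)) / (Q : ℚ) - (h : ℚ) / (φ : ℚ)) =
      (∑ h ∈ Finset.Icc 1 φ, ((useq Q (i+h) : ℚ) - (a:ℚ))) / Q
        - (∑ h ∈ Finset.Icc 1 φ, (h:ℚ)) / φ := by
    rw [Finset.sum_sub_distrib, Finset.sum_div, Finset.sum_div]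
  rw [hsplit, sum1, gauss_Icc, ← Finset.sum_filter, sum2]
  have hQne : (Q:ℚ) ≠ 0 := by positivity
  have hφne : (φ:ℚ) ≠ 0 := by
    have : (0:ℚ) < φ := by exact_mod_cast hφ0
    exact this.ne'
  field_simp
  ring
end
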